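/- Let n ≥ 2 and m ≥ 1 be integers. Every vertex of the regular (nm+2)-gon is incident with some element of any given τ_m-orbit of m-diagonals. Explicitly, for an m-diagonal D = {i, i+km+1} with 1 ≤ k ≤ n−1, one has τ_m^{k−n}(D) = {i+(n−k)m, i−1} (indices mod nm+2); in particular, for every vertex v of the polygon there is an integer t such that v is an endpoint of τ_m^t(D). -/

import Mathlib

/-- The translation `τ_m` as a permutation of unordered pairs of vertices:
it sends `{i,j}` to `{i-m, j-m}` (anticlockwise rotation through `2mπ/(nm+2)`). -/
def tauMPerm (N m : ℕ) : Equiv.Perm (Sym2 (ZMod N)) where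
  toFun := Sym2.map (fun x => x - (m : ZMod N))
  invFun := Sym2.map (fun x => x + (m : ZMod N))
  left_inv p := by
    induction p with
    | _ a b => simp
  right_inv p := by
    induction p with
    | _ a b => simp

lemma tau_apply (N m : ℕ) (a b : ZMod N) :
    (tauMPerm N m) s(a, b) = s(a - m, b - m) := rfl

lemma tau_inv_apply (N m : ℕ) (a b : ZMod N) :
    (tauMPerm N m)⁻¹ s(a, b) = s(a + m, b + m) := rfl

lemma tau_zpow (N m : ℕ) (t : ℤ) (a b : ZMod N) :
    ((tauMPerm N m) ^ t) s(a, b)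
      = s(a - ((t * m : ℤ) : ZMod N), b - ((t * m : ℤ) : ZMod N)) := by
  induction t using Int.induction_on generalizing a b with
  | zero => simp
  | succ j ih =>
      rw [zpow_add_one, Equiv.Perm.mul_apply, tau_apply, ih]
      have e1 : a - (m : ZMod N) - (((j : ℤ) * m : ℤ) : ZMod N)
          = a - ((((j : ℤ) + 1) * m : ℤ) : ZMod N) := by push_cast; ring
      have e2 : b - (m : ZMod N) - (((j : ℤ) * m : ℤ) : ZMod N)
          = b - ((((j : ℤ) + 1) * m : ℤ) : ZMod N) := by push_cast; ring
      rw [e1, e2]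
  | pred j ih =>
      rw [zpow_sub_one, Equiv.Perm.mul_apply, tau_inv_apply, ih]
      have e1 : a + (m : ZMod N) - (((-(j : ℤ)) * m : ℤ) : ZMod N)
          = a - (((-(j : ℤ) - 1) * m : ℤ) : ZMod N) := by push_cast; ring
      have e2 : b + (m : ZMod N) - (((-(j : ℤ)) * m : ℤ) : ZMod N)
          = b - (((-(j : ℤ) - 1) * m : ℤ) : ZMod N) := by push_cast; ring
      rw [e1, e2]

lemma solve_cong (m N a : ℤ) (h : (Int.gcd m N : ℤ) ∣ a) :
    ∃ t : ℤ, N ∣ t * m - a := by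
  obtain ⟨c, hc⟩ := h
  refine ⟨Int.gcdA m N * c, ⟨-(Int.gcdB m N * c), ?_⟩⟩
  have hb := Int.gcd_eq_gcd_ab m N
  rw [hc]
  linear_combination (-c) * hb

theorem stmt3 (n m : ℕ) (hn : 2 ≤ n) (hm : 1 ≤ m) (i : ZMod (n*m+2)) (k : ℕ)
    (h1 : 1 ≤ k) (h2 : k ≤ n - 1) :
    ((tauMPerm (n*m+2) m) ^ ((k : ℤ) - (n : ℤ)))
        s(i, i + ((k*m+1 : ℕ) : ZMod (n*m+2)))
      = s(i + (((n-k)*m : ℕ) : ZMod (n*m+2)), i - 1) ∧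
    ∀ v : ZMod (n*m+2), ∃ t : ℤ,
      v ∈ ((tauMPerm (n*m+2) m) ^ t) s(i, i + ((k*m+1 : ℕ) : ZMod (n*m+2))) := by
  have hkn : k ≤ n := le_trans h2 (Nat.sub_le n 1)
  have hN0 : ((n*m+2 : ℕ) : ZMod (n*m+2)) = 0 := ZMod.natCast_self _
  have hN0' : ((n : ZMod (n*m+2)) * m + 2) = 0 := by push_cast at hN0; linear_combination hN0
  constructor
  · rw [tau_zpow]
    have e1 : i - ((((k : ℤ) - n) * m : ℤ) : ZMod (n*m+2))
        = i + (((n-k)*m : ℕ) : ZMod (n*m+2)) := by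
      push_cast [Nat.cast_sub hkn]; ring
    have e2 : i + ((k*m+1 : ℕ) : ZMod (n*m+2)) - ((((k : ℤ) - n) * m : ℤ) : ZMod (n*m+2))
        = i - 1 := by
      push_cast; linear_combination hN0'
    rw [e1, e2]
  · intro v
    haveI : NeZero (n*m+2) := ⟨by omega⟩
    set c : ℤ := ((v - i).val : ℤ) with hcdef
    have hc : ((c : ℤ) : ZMod (n*m+2)) = v - i := by
      simp [hcdef, ZMod.natCast_val, ZMod.cast_id]
    have hg2 : (Int.gcd (m : ℤ) ((n*m+2 : ℕ) : ℤ)) ∣ 2 := by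
      have h1' : (Int.gcd (m : ℤ) ((n*m+2 : ℕ) : ℤ) : ℤ) ∣ (m : ℤ) := Int.gcd_dvd_left _ _
      have h2' : (Int.gcd (m : ℤ) ((n*m+2 : ℕ) : ℤ) : ℤ) ∣ ((n*m+2 : ℕ) : ℤ) := Int.gcd_dvd_right _ _
      have : (Int.gcd (m : ℤ) ((n*m+2 : ℕ) : ℤ) : ℤ) ∣ 2 := by
        have := dvd_sub h2' (Dvd.dvd.mul_left h1' n)
        push_cast at this ⊢
        rwa [show ((n : ℤ) * m + 2 - n * m) = 2 by ring] at this
      exact_mod_cast this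
    have key : ∃ t : ℤ, ((n*m+2 : ℕ) : ℤ) ∣ t * m - (-c) ∨
        ((n*m+2 : ℕ) : ℤ) ∣ t * m - ((k*m+1 : ℕ) - c) := by
      rcases (Nat.dvd_prime Nat.prime_two).mp hg2 with hg | hg
      · obtain ⟨t, ht⟩ := solve_cong m ((n*m+2 : ℕ) : ℤ) (-c) (by rw [hg]; exact one_dvd _)
        exact ⟨t, Or.inl ht⟩
      · have hm2 : (2 : ℤ) ∣ (m : ℤ) := by
          have h' : (Int.gcd (m : ℤ) ((n*m+2 : ℕ) : ℤ) : ℤ) ∣ (m : ℤ) := Int.gcd_dvd_left _ _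
          rw [hg] at h'
          exact_mod_cast h'
        rcases Int.even_or_odd c with hcpar | hcpar
        · obtain ⟨t, ht⟩ := solve_cong m ((n*m+2 : ℕ) : ℤ) (-c)
            (by rw [hg]; exact_mod_cast hcpar.neg.two_dvd)
          exact ⟨t, Or.inl ht⟩
        · have hdd : (2 : ℤ) ∣ ((k*m+1 : ℕ) : ℤ) - c := by
            obtain ⟨c', hc'⟩ := hcpar
            obtain ⟨m', hm'⟩ := hm2
            push_cast
            refine ⟨k*m' - c', ?_⟩
            rw [hc', hm']; ring
          obtain ⟨t, ht⟩ := solve_cong m ((n*m+2 : ℕ) : ℤ) (((k*m+1 : ℕ) : ℤ) - c)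
            (by rw [hg]; exact_mod_cast hdd)
          exact ⟨t, Or.inr ht⟩
    obtain ⟨t, ht | ht⟩ := key
    · refine ⟨t, ?_⟩
      rw [tau_zpow, Sym2.mem_iff]
      left
      have : ((t * m - (-c) : ℤ) : ZMod (n*m+2)) = 0 := by
        rw [ZMod.intCast_zmod_eq_zero_iff_dvd]
        exact_mod_cast ht
      push_cast at this hc ⊢
      linear_combination this - hc
    · refine ⟨t, ?_⟩
      rw [tau_zpow, Sym2.mem_iff]
      right
      have : ((t * m - ((k*m+1 : ℕ) - c) : ℤ) : ZMod (n*m+2)) = 0 := by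
        rw [ZMod.intCast_zmod_eq_zero_iff_dvd]
        exact_mod_cast ht
      push_cast at this hc ⊢
      linear_combination this - hc
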